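/- For every nonnegative integer r there exists a constant C > 0, depending only on L and r, such that for every f ∈ ℂ^N and every t > 0, K_r(f, t) ≤ C · ω_r(f, t). -/

import Mathlib

open Matrix

noncomputable section

/-- Euclidean (2-)norm on `ℂ^N`. -/
def cnorm2 {N : ℕ} (f : Fin N → ℂ) : ℝ := Real.sqrt (∑ i, ‖f i‖ ^ 2)

/-- The spectral operator `Σ_j c_j u_j u_j^*`. -/
def specOp {N : ℕ} (u : Fin N → Fin N → ℂ) (c : Fin N → ℂ) : Matrix (Fin N) (Fin N) ℂ :=
  ∑ j, c j • Matrix.vecMulVec (u j) (star (u j))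

/-- The graph translation operator `T_s = Σ_j e^{i s √λ_j} u_j u_j^*`. -/
def Tmat {N : ℕ} (u : Fin N → Fin N → ℂ) (lam : Fin N → ℝ) (s : ℝ) :
    Matrix (Fin N) (Fin N) ℂ :=
  specOp u (fun j => Complex.exp (Complex.I * (s : ℂ) * (Real.sqrt (lam j) : ℂ)))

/-- The `r`-th modulus of smoothness `ω_r(f,t) = sup_{|s| ≤ t} ‖(T_s - I)^r f‖₂`. -/
def omegaMod {N : ℕ} (u : Fin N → Fin N → ℂ) (lam : Fin N → ℝ) (r : ℕ) (f : Fin N → ℂ)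
    (t : ℝ) : ℝ :=
  ⨆ s : {s : ℝ // |s| ≤ t}, cnorm2 (((Tmat u lam s.1 - 1) ^ r).mulVec f)

/-- Functional calculus power `L^x = Σ_j λ_j^x u_j u_j^*` (with `0^0 = 1`). -/
def Lpow {N : ℕ} (u : Fin N → Fin N → ℂ) (lam : Fin N → ℝ) (x : ℝ) :
    Matrix (Fin N) (Fin N) ℂ :=
  specOp u (fun j => ((lam j ^ x : ℝ) : ℂ))

/-- The `K`-functional `K_r(f,t) = inf_g ( ‖f-g‖₂ + (t/2)^r ‖L^{r/2} g‖₂ )`. -/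
def Kfun {N : ℕ} (u : Fin N → Fin N → ℂ) (lam : Fin N → ℝ) (r : ℕ) (f : Fin N → ℂ)
    (t : ℝ) : ℝ :=
  ⨅ g : Fin N → ℂ, (cnorm2 (f - g) + (t / 2) ^ r * cnorm2 ((Lpow u lam ((r : ℝ) / 2)).mulVec g))

variable {N : ℕ} (u : Fin N → Fin N → ℂ)

lemma specOp_mulVec (c : Fin N → ℂ) (f : Fin N → ℂ) :
    (specOp u c).mulVec f = ∑ j, (c j * (star (u j) ⬝ᵥ f)) • u j := by
  ext i
  simp only [specOp, Matrix.mulVec, dotProduct, Finset.sum_apply, Matrix.sum_apply,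
    Matrix.smul_apply, Matrix.vecMulVec_apply, Pi.smul_apply, Pi.star_apply, smul_eq_mul,
    Finset.sum_mul, Finset.mul_sum]
  rw [Finset.sum_comm]
  apply Finset.sum_congr rfl
  intro j _
  apply Finset.sum_congr rfl
  intro k _
  ring

lemma specOp_sub (c d : Fin N → ℂ) : specOp u (c - d) = specOp u c - specOp u d := by
  simp [specOp, sub_smul, Finset.sum_sub_distrib]

variable (hu : ∀ i j, star (u i) ⬝ᵥ u j = if i = j then 1 else 0)

include hu

lemma specOp_mul (c d : Fin N → ℂ) :
    specOp u c * specOp u d = specOp u (c * d) := by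
  simp only [specOp, Finset.sum_mul, Finset.mul_sum, smul_mul_assoc, mul_smul_comm]
  apply Finset.sum_congr rfl
  intro j _
  rw [Finset.sum_eq_single j]
  · have h1 : Matrix.vecMulVec (u j) (star (u j)) * Matrix.vecMulVec (u j) (star (u j))
        = Matrix.vecMulVec (u j) (star (u j)) := by
      ext i k
      simp only [Matrix.mul_apply, Matrix.vecMulVec_apply, Pi.star_apply]
      have h : ∑ m, star (u j m) * u j m = 1 := by simpa [dotProduct] using hu j j
      calc ∑ m, u j i * star (u j m) * (u j m * star (u j k))
          = u j i * star (u j k) * ∑ m, star (u j m) * u j m := by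
            rw [Finset.mul_sum]; apply Finset.sum_congr rfl; intro m _; ring
        _ = u j i * star (u j k) := by rw [h, mul_one]
    rw [h1, smul_smul, Pi.mul_apply, mul_comm]
  · intro k _ hk
    have horth : Matrix.vecMulVec (u k) (star (u k)) * Matrix.vecMulVec (u j) (star (u j)) = 0 := by
      ext i m
      simp only [Matrix.mul_apply, Matrix.vecMulVec_apply, Pi.star_apply, Matrix.zero_apply]
      have h : ∑ p, star (u k p) * u j p = 0 := by simpa [dotProduct, hk] using hu k j
      calc ∑ p, u k i * star (u k p) * (u j p * star (u j m))
          = u k i * star (u j m) * ∑ p, star (u k p) * u j p := by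
            rw [Finset.mul_sum]; apply Finset.sum_congr rfl; intro p _; ring
        _ = 0 := by rw [h, mul_zero]
    simp [horth]
  · intro h; exact absurd (Finset.mem_univ j) h

lemma specOp_one : specOp u 1 = 1 := by
  have hUU : (Matrix.of u) * (Matrix.of u)ᴴ = 1 := by
    ext j i
    have h := hu i j
    simp only [dotProduct, Pi.star_apply] at h
    simp only [Matrix.mul_apply, Matrix.conjTranspose_apply, Matrix.of_apply, Matrix.one_apply]
    rw [show ∑ m, u j m * star (u i m) = ∑ m, star (u i m) * u j m from
      Finset.sum_congr rfl fun m _ => mul_comm _ _, h]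
    by_cases hij : i = j
    · subst hij; simp
    · rw [if_neg hij, if_neg (Ne.symm hij)]
  have hU'U : (Matrix.of u)ᴴ * (Matrix.of u) = 1 := mul_eq_one_comm.mp hUU
  ext i k
  have h2 := congrArg (fun M => M i k) hU'U
  simp only [Matrix.mul_apply, Matrix.conjTranspose_apply, Matrix.of_apply] at h2
  simp only [specOp, Pi.one_apply, one_smul, Matrix.sum_apply, Matrix.vecMulVec_apply,
    Pi.star_apply]
  have h3 : ∑ j, u j i * star (u j k) = star (∑ j, star (u j i) * u j k) := by
    rw [star_sum]
    apply Finset.sum_congr rfl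
    intro j _
    rw [star_mul', star_star, mul_comm]
  rw [h3, h2]
  by_cases hik : i = k
  · subst hik; simp [Matrix.one_apply]
  · simp [Matrix.one_apply, hik]

lemma specOp_pow (c : Fin N → ℂ) (r : ℕ) : (specOp u c) ^ r = specOp u (c ^ r) := by
  induction r with
  | zero => simp [pow_zero, specOp_one u hu]
  | succ n ih => rw [pow_succ, ih, specOp_mul u hu, pow_succ]

lemma parseval_sum (d : Fin N → ℂ) :
    ∑ i, ‖(∑ j, d j • u j) i‖ ^ 2 = ∑ j, ‖d j‖ ^ 2 := by
  set v : Fin N → ℂ := ∑ j, d j • u j with hv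
  have h1 : ∑ i, star (v i) * v i = ∑ j, star (d j) * d j := by
    have hvi : ∀ i, v i = ∑ j, d j * u j i := by
      intro i; rw [hv]; simp [Finset.sum_apply]
    calc ∑ i, star (v i) * v i
        = ∑ i, ∑ j, ∑ k, star (d j) * d k * (star (u j i) * u k i) := by
          apply Finset.sum_congr rfl; intro i _
          rw [hvi i, star_sum, Finset.sum_mul]
          apply Finset.sum_congr rfl; intro j _
          rw [Finset.mul_sum]
          apply Finset.sum_congr rfl; intro k _
          rw [star_mul']; ring
      _ = ∑ j, ∑ k, star (d j) * d k * (∑ i, star (u j i) * u k i) := by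
          rw [Finset.sum_comm]
          apply Finset.sum_congr rfl; intro j _
          rw [Finset.sum_comm]
          apply Finset.sum_congr rfl; intro k _
          rw [Finset.mul_sum]
      _ = ∑ j, ∑ k, star (d j) * d k * (if j = k then 1 else 0) := by
          apply Finset.sum_congr rfl; intro j _
          apply Finset.sum_congr rfl; intro k _
          have h : ∑ i, star (u j i) * u k i = if j = k then 1 else 0 := by
            simpa [dotProduct] using hu j k
          rw [h]
      _ = ∑ j, star (d j) * d j := by
          apply Finset.sum_congr rfl; intro j _
          simp
  have h2 : ∀ z : ℂ, star z * z = ((‖z‖ ^ 2 : ℝ) : ℂ) := by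
    intro z
    rw [Complex.star_def, ← Complex.normSq_eq_conj_mul_self, Complex.normSq_eq_norm_sq]
  simp only [h2] at h1
  exact_mod_cast h1

lemma cnorm2_specOp (φ : Fin N → ℂ) (f : Fin N → ℂ) :
    cnorm2 ((specOp u φ).mulVec f)
      = Real.sqrt (∑ j, ‖φ j‖ ^ 2 * ‖star (u j) ⬝ᵥ f‖ ^ 2) := by
  rw [cnorm2, specOp_mulVec, parseval_sum u hu]
  congr 1
  apply Finset.sum_congr rfl
  intro j _
  rw [norm_mul, mul_pow]

end

open Real intervalIntegral

noncomputable section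

lemma sin_int_lb (r : ℕ) (hr : 1 ≤ r) :
    ∃ c : ℝ, 0 < c ∧ ∀ T : ℝ, 0 < T →
      c * min 1 T ^ (2*r) * T ≤ ∫ x in (0:ℝ)..T, Real.sin x ^ (2*r) := by
  set g : ℝ → ℝ := fun x => Real.sin x ^ (2*r) with hg_def
  have hg : Continuous g := Real.continuous_sin.pow _
  have hgi : ∀ a b : ℝ, IntervalIntegrable g MeasureTheory.volume a b :=
    fun a b => hg.intervalIntegrable a b
  have hnonneg : ∀ x, 0 ≤ g x := fun x => by
    simpa [hg_def] using (even_two_mul r).pow_nonneg (Real.sin x)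
  have hper : Function.Periodic g π := by
    intro x
    simp only [hg_def, Real.sin_add_pi]
    exact (even_two_mul r).neg_pow _
  have hJnonneg : ∀ a b : ℝ, a ≤ b → 0 ≤ ∫ x in a..b, g x := fun a b hab =>
    intervalIntegral.integral_nonneg hab (fun x _ => hnonneg x)
  have hJmono : ∀ a b : ℝ, 0 ≤ a → a ≤ b → (∫ x in (0:ℝ)..a, g x) ≤ ∫ x in (0:ℝ)..b, g x := by
    intro a b _ hab
    rw [← intervalIntegral.integral_add_adjacent_intervals (hgi 0 a) (hgi a b)]
    linarith [hJnonneg a b hab]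
  set I : ℝ := ∫ x in (0:ℝ)..(π/2), g x with hI_def
  have hIpos : 0 < I := by
    apply intervalIntegral.intervalIntegral_pos_of_pos_on (hgi 0 (π/2))
    · intro x hx
      exact pow_pos (Real.sin_pos_of_pos_of_lt_pi hx.1 (by linarith [hx.2, Real.pi_pos])) _
    · linarith [Real.pi_pos]
  have hIπ : I ≤ ∫ x in (0:ℝ)..π, g x := hJmono (π/2) π (by positivity) (by linarith [Real.pi_pos])
  have hstep : ∀ n : ℕ, ((n:ℝ)+1) * I ≤ ∫ x in (0:ℝ)..(π/2 + n*π), g x := by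
    intro n
    induction n with
    | zero => simpa using le_of_eq rfl
    | succ n ih =>
      have hsplit : (∫ x in (0:ℝ)..(π/2 + (n+1)*π), g x)
          = (∫ x in (0:ℝ)..(π/2 + n*π), g x) + ∫ x in (π/2 + n*π)..(π/2 + n*π + π), g x := by
        rw [intervalIntegral.integral_add_adjacent_intervals (hgi _ _) (hgi _ _)]
        ring_nf
      have hshift : (∫ x in (π/2 + n*π)..(π/2 + n*π + π), g x) = ∫ x in (0:ℝ)..(0+π), g x :=
        hper.intervalIntegral_add_eq _ _
      push_cast
      rw [hsplit, hshift]
      have : I ≤ ∫ x in (0:ℝ)..(0+π), g x := by simpa using hIπ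
      push_cast at ih
      linarith
  refine ⟨min ((2/π)^(2*r) / (2*r+1)) (I/5), lt_min (by positivity) (by positivity), ?_⟩
  intro T hT
  by_cases hTs : T ≤ π/2
  · -- small case
    have hcomp : (∫ x in (0:ℝ)..T, (2/π * x)^(2*r)) ≤ ∫ x in (0:ℝ)..T, g x := by
      apply intervalIntegral.integral_mono_on hT.le
        (by apply Continuous.intervalIntegrable; continuity) (hgi 0 T)
      intro x hx
      exact pow_le_pow_left₀ (mul_nonneg (by positivity) hx.1)
        (Real.mul_le_sin hx.1 (le_trans hx.2 hTs)) _
    have hval : (∫ x in (0:ℝ)..T, (2/π * x)^(2*r)) = (2/π)^(2*r) * (T^(2*r+1)) / (2*r+1) := by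
      simp only [mul_pow]
      rw [intervalIntegral.integral_const_mul, integral_pow]
      push_cast
      ring
    have hmin : min 1 T ^ (2*r) ≤ T^(2*r) := pow_le_pow_left₀ (le_min zero_le_one hT.le)
      (min_le_right 1 T) _
    calc min ((2/π)^(2*r) / (2*r+1)) (I/5) * min 1 T ^ (2*r) * T
        ≤ (2/π)^(2*r) / (2*r+1) * T^(2*r) * T := by
          apply mul_le_mul _ le_rfl hT.le (by positivity)
          exact mul_le_mul (min_le_left _ _) hmin (by positivity) (by positivity)
      _ = (2/π)^(2*r) * (T^(2*r+1)) / (2*r+1) := by rw [pow_succ]; ring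
      _ ≤ ∫ x in (0:ℝ)..T, g x := hval ▸ hcomp
  · -- large case
    push_neg at hTs
    set n : ℕ := Nat.floor ((T - π/2)/π) with hn_def
    have hπ : 0 < π := Real.pi_pos
    have hfl : (n:ℝ) ≤ (T - π/2)/π := Nat.floor_le (div_nonneg (by linarith) hπ.le)
    have hfl' : (T - π/2)/π < n + 1 := Nat.lt_floor_add_one _
    have h1 : π/2 + n*π ≤ T := by
      have := (le_div_iff₀ hπ).mp hfl
      nlinarith
    have h2 : T < π/2 + (n+1)*π := by
      have := (div_lt_iff₀ hπ).mp hfl'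
      nlinarith
    have hJ : ((n:ℝ)+1) * I ≤ ∫ x in (0:ℝ)..T, g x :=
      le_trans (hstep n) (hJmono _ _ (by positivity) h1)
    have hT5 : T ≤ 5 * ((n:ℝ)+1) := by nlinarith [Real.pi_lt_d2, Real.pi_gt_three]
    have hminle : min 1 T ^ (2*r) ≤ 1 := pow_le_one₀ (le_min zero_le_one hT.le) (min_le_left _ _)
    calc min ((2/π)^(2*r) / (2*r+1)) (I/5) * min 1 T ^ (2*r) * T
        ≤ (I/5) * 1 * T := by
          apply mul_le_mul _ le_rfl hT.le (by positivity)
          exact mul_le_mul (min_le_right _ _) hminle (by positivity) (by positivity)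
      _ = (I/5) * T := by ring
      _ ≤ (I/5) * (5*((n:ℝ)+1)) := by
          apply mul_le_mul le_rfl hT5 hT.le (by positivity)
      _ = ((n:ℝ)+1) * I := by ring
      _ ≤ ∫ x in (0:ℝ)..T, g x := hJ

end

noncomputable section
lemma sin_int_scaled (r : ℕ) (hr : 1 ≤ r) :
    ∃ c : ℝ, 0 < c ∧ ∀ t : ℝ, 0 < t → ∀ a : ℝ, 0 ≤ a →
      c * min 1 (t*a) ^ (2*r) * t ≤ ∫ s in (0:ℝ)..t, Real.sin (s*a) ^ (2*r) := by
  obtain ⟨c, hc, h⟩ := sin_int_lb r hr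
  refine ⟨c, hc, ?_⟩
  intro t ht a ha
  rcases eq_or_lt_of_le ha with rfl|ha'
  · have h2r : 2*r ≠ 0 := by omega
    simp [zero_pow h2r]
  · have hcv := intervalIntegral.integral_comp_mul_right
      (fun x => Real.sin x ^ (2*r)) (a := 0) (b := t) (ne_of_gt ha')
    simp only [zero_mul, smul_eq_mul] at hcv
    rw [hcv]
    calc c * min 1 (t*a) ^ (2*r) * t = a⁻¹ * (c * min 1 (t*a) ^ (2*r) * (t*a)) := by
          field_simp
      _ ≤ a⁻¹ * ∫ x in (0:ℝ)..(t*a), Real.sin x ^ (2*r) := by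
          apply mul_le_mul le_rfl (h (t*a) (by positivity)) (by positivity) (by positivity)

lemma norm_exp_sub_one_sq (s b : ℝ) :
    ‖Complex.exp (Complex.I * (s:ℂ) * (b:ℂ)) - 1‖^2 = 4 * Real.sin (s*b/2)^2 := by
  have h1 : Complex.I * (s:ℂ) * (b:ℂ) = ((s*b : ℝ) : ℂ) * Complex.I := by
    push_cast; ring
  rw [h1, Complex.exp_mul_I]
  set x : ℝ := s * b
  have h2 : Complex.cos x + Complex.sin x * Complex.I - 1
      = ((Real.cos x - 1 : ℝ) : ℂ) + ((Real.sin x : ℝ) : ℂ) * Complex.I := by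
    push_cast [Complex.ofReal_cos, Complex.ofReal_sin]; ring
  rw [h2]
  rw [Complex.sq_norm, Complex.normSq_add_mul_I]
  have h5 : Real.cos (2*(x/2)) = 2 * Real.cos (x/2)^2 - 1 := Real.cos_two_mul (x/2)
  rw [show 2*(x/2) = x by ring] at h5
  nlinarith [Real.sin_sq_add_cos_sq x, Real.sin_sq_add_cos_sq (x/2), h5]

/-- For every nonnegative integer `r` there is a constant `C > 0`
(depending only on `L`, i.e. on the spectral data `(u, λ)`, and on `r`) such that for
every `f ∈ ℂ^N` and every `t > 0`, `K_r(f, t) ≤ C · ω_r(f, t)`. -/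
theorem stmt6
    (N : ℕ) (hN : 2 ≤ N)
    (u : Fin N → Fin N → ℂ)
    (hu : ∀ i j, star (u i) ⬝ᵥ u j = if i = j then 1 else 0)
    (lam : Fin N → ℝ) (hmono : Monotone lam)
    (hlam0 : lam ⟨0, by omega⟩ = 0) (hlam1 : 0 < lam ⟨1, by omega⟩)
    (r : ℕ) :
    ∃ C : ℝ, 0 < C ∧ ∀ (f : Fin N → ℂ) (t : ℝ), 0 < t →
      Kfun u lam r f t ≤ C * omegaMod u lam r f t := by
  have hlamnn : ∀ j, 0 ≤ lam j := by
    intro j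
    rw [← hlam0]
    exact hmono (by simp [Fin.le_def])
  have hKbdd : ∀ (f : Fin N → ℂ) (t : ℝ), 0 < t → BddBelow (Set.range fun g : Fin N → ℂ =>
      cnorm2 (f - g) + (t / 2) ^ r * cnorm2 ((Lpow u lam ((r : ℝ) / 2)).mulVec g)) := by
    intro f t ht
    refine ⟨0, ?_⟩
    rintro x ⟨g, rfl⟩
    have h1 : 0 ≤ cnorm2 (f - g) := Real.sqrt_nonneg _
    have h2 : 0 ≤ cnorm2 ((Lpow u lam ((r : ℝ) / 2)).mulVec g) := Real.sqrt_nonneg _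
    have h3 : (0:ℝ) ≤ (t/2)^r := by positivity
    exact add_nonneg h1 (mul_nonneg h3 h2)
  rcases Nat.eq_zero_or_pos r with rfl | hr
  · -- r = 0
    refine ⟨1, one_pos, ?_⟩
    intro f t ht
    have hne : Nonempty {s : ℝ // |s| ≤ t} := ⟨⟨0, by simp [ht.le]⟩⟩
    have homega : omegaMod u lam 0 f t = cnorm2 f := by
      unfold omegaMod
      simp only [pow_zero, Matrix.one_mulVec]
      exact ciSup_const
    have hK : Kfun u lam 0 f t ≤ cnorm2 f := by
      refine le_trans (ciInf_le (hKbdd f t ht) (0 : Fin N → ℂ)) (le_of_eq ?_)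
      simp [cnorm2, Matrix.mulVec_zero]
    rw [homega, one_mul]
    exact hK
  · obtain ⟨c0, hc0, hint⟩ := sin_int_scaled r hr
    refine ⟨2 / Real.sqrt c0, by positivity, ?_⟩
    intro f t ht
    set sq : Fin N → ℝ := fun j => Real.sqrt (lam j) with hsq_def
    set a : Fin N → ℝ := fun j => sq j / 2 with ha_def
    set cf : Fin N → ℝ := fun j => ‖star (u j) ⬝ᵥ f‖^2 with hcf_def
    have hcf : ∀ j, 0 ≤ cf j := fun j => by positivity
    have hanonneg : ∀ j, 0 ≤ a j := fun j => by
      simp only [ha_def, hsq_def]; positivity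
    set G : ℝ → ℝ := fun s => ∑ j, (4:ℝ)^r * cf j * Real.sin (s * a j)^(2*r) with hG_def
    set S := omegaMod u lam r f t with hS_def
    -- identity for the omega integrand
    have hF : ∀ s : ℝ, cnorm2 (((Tmat u lam s - 1) ^ r).mulVec f) = Real.sqrt (G s) := by
      intro s
      have hT : Tmat u lam s - 1
          = specOp u (fun j => Complex.exp (Complex.I * (s:ℂ) * (sq j : ℂ)) - 1) := by
        rw [show (fun j => Complex.exp (Complex.I * (s:ℂ) * (sq j : ℂ)) - 1)
            = (fun j => Complex.exp (Complex.I * (s:ℂ) * (sq j : ℂ))) - 1 from rfl,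
          specOp_sub, specOp_one u hu]
        rfl
      rw [hT, specOp_pow u hu, cnorm2_specOp u hu]
      congr 1
      apply Finset.sum_congr rfl
      intro j _
      simp only [Pi.pow_apply]
      rw [norm_pow, ← pow_mul, mul_comm r 2, pow_mul, norm_exp_sub_one_sq]
      have : s * sq j / 2 = s * a j := by rw [ha_def]; ring
      rw [this, mul_pow, ← pow_mul]
      ring_nf
      rfl
    have hGnonneg : ∀ s, 0 ≤ G s := by
      intro s
      apply Finset.sum_nonneg
      intro j _
      have : (0:ℝ) ≤ Real.sin (s * a j)^(2*r) := by
        rw [mul_comm 2 r, pow_mul]; positivity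
      positivity
    have hFle : ∀ s : ℝ, Real.sqrt (G s) ≤ Real.sqrt (∑ j, (4:ℝ)^r * cf j) := by
      intro s
      apply Real.sqrt_le_sqrt
      apply Finset.sum_le_sum
      intro j _
      have hsin : Real.sin (s * a j)^(2*r) ≤ 1 := by
        rw [pow_mul]
        apply pow_le_one₀ (sq_nonneg _)
        nlinarith [Real.neg_one_le_sin (s * a j), Real.sin_le_one (s * a j)]
      have hsinnn : (0:ℝ) ≤ Real.sin (s * a j)^(2*r) := by
        rw [pow_mul]; positivity
      calc (4:ℝ)^r * cf j * Real.sin (s*a j)^(2*r) ≤ (4:ℝ)^r * cf j * 1 :=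
            mul_le_mul le_rfl hsin hsinnn (by positivity)
        _ = (4:ℝ)^r * cf j := mul_one _
    have hBdd : BddAbove (Set.range fun s : {s : ℝ // |s| ≤ t} =>
        cnorm2 (((Tmat u lam s.1 - 1) ^ r).mulVec f)) := by
      refine ⟨Real.sqrt (∑ j, (4:ℝ)^r * cf j), ?_⟩
      rintro x ⟨s, rfl⟩
      exact le_of_eq_of_le (hF s.1) (hFle s.1)
    have hne : Nonempty {s : ℝ // |s| ≤ t} := ⟨⟨0, by simp [ht.le]⟩⟩
    have hSle : ∀ s : {s:ℝ//|s|≤t}, Real.sqrt (G s.1) ≤ S := by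
      intro s
      rw [← hF s.1]
      exact le_ciSup hBdd s
    have hSnn : 0 ≤ S := le_trans (Real.sqrt_nonneg _) (hSle ⟨0, by simp [ht.le]⟩)
    have hGleS : ∀ s ∈ Set.Icc (0:ℝ) t, G s ≤ S^2 := by
      intro s hs
      have h1 : Real.sqrt (G s) ≤ S := hSle ⟨s, abs_le.mpr ⟨by linarith [hs.1], hs.2⟩⟩
      nlinarith [Real.sq_sqrt (hGnonneg s), Real.sqrt_nonneg (G s)]
    have hGcont : Continuous G := by
      apply continuous_finset_sum
      intro j _
      fun_prop
    have hint_le : ∫ s in (0:ℝ)..t, G s ≤ t * S^2 := by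
      calc ∫ s in (0:ℝ)..t, G s ≤ ∫ _ in (0:ℝ)..t, S^2 :=
            intervalIntegral.integral_mono_on ht.le (hGcont.intervalIntegrable _ _)
              intervalIntegrable_const hGleS
        _ = t * S^2 := by simp
    have hsum_int : (∫ s in (0:ℝ)..t, G s)
        = ∑ j, (4:ℝ)^r * cf j * ∫ s in (0:ℝ)..t, Real.sin (s * a j)^(2*r) := by
      have : (∫ s in (0:ℝ)..t, G s)
          = ∫ s in (0:ℝ)..t, ∑ j, (4:ℝ)^r * cf j * Real.sin (s * a j)^(2*r) := rfl
      rw [this, intervalIntegral.integral_finset_sum]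
      · exact Finset.sum_congr rfl fun j _ => intervalIntegral.integral_const_mul _ _
      · intro j _
        apply Continuous.intervalIntegrable
        fun_prop
    have hminnn : ∀ j, (0:ℝ) ≤ min 1 (t * a j) :=
      fun j => le_min zero_le_one (mul_nonneg ht.le (hanonneg j))
    have hchain : c0 * t * (∑ j, (4:ℝ)^r * cf j * min 1 (t * a j)^(2*r)) ≤ t * S^2 := by
      calc c0 * t * (∑ j, (4:ℝ)^r * cf j * min 1 (t*a j)^(2*r))
          = ∑ j, (4:ℝ)^r * cf j * (c0 * min 1 (t*a j)^(2*r) * t) := by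
            rw [Finset.mul_sum]; exact Finset.sum_congr rfl fun j _ => by ring
        _ ≤ ∑ j, (4:ℝ)^r * cf j * ∫ s in (0:ℝ)..t, Real.sin (s*a j)^(2*r) := by
            apply Finset.sum_le_sum; intro j _
            exact mul_le_mul le_rfl (hint t ht (a j) (hanonneg j))
              (mul_nonneg (mul_nonneg hc0.le (pow_nonneg (hminnn j) _)) ht.le)
              (mul_nonneg (by positivity) (hcf j))
        _ = ∫ s in (0:ℝ)..t, G s := hsum_int.symm
        _ ≤ t * S^2 := hint_le
    set Q : ℝ := ∑ j, min 1 (t * sq j)^(2*r) * cf j with hQ_def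
    have hQle4 : Q ≤ ∑ j, (4:ℝ)^r * cf j * min 1 (t * a j)^(2*r) := by
      apply Finset.sum_le_sum
      intro j _
      have hmin2 : min 1 (t * sq j) ≤ 2 * min 1 (t * a j) := by
        have h2a : t * sq j = 2 * (t * a j) := by rw [ha_def]; ring
        rw [h2a]
        rcases le_total (t * a j) 1 with h|h
        · calc min 1 (2*(t*a j)) ≤ 2*(t*a j) := min_le_right _ _
            _ = 2 * min 1 (t*a j) := by rw [min_eq_right h]
        · calc min 1 (2*(t*a j)) ≤ 1 := min_le_left _ _
            _ ≤ 2 * min 1 (t*a j) := by rw [min_eq_left h]; norm_num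
      have h0 : 0 ≤ min 1 (t * sq j) :=
        le_min zero_le_one (mul_nonneg ht.le (Real.sqrt_nonneg _))
      have hpow : min 1 (t * sq j)^(2*r) ≤ (4:ℝ)^r * min 1 (t*a j)^(2*r) := by
        calc min 1 (t*sq j)^(2*r) ≤ (2 * min 1 (t*a j))^(2*r) := pow_le_pow_left₀ h0 hmin2 _
          _ = (4:ℝ)^r * min 1 (t*a j)^(2*r) := by
              rw [mul_pow, show ((2:ℝ))^(2*r) = (4:ℝ)^r by rw [pow_mul]; norm_num]
      calc min 1 (t*sq j)^(2*r) * cf j ≤ ((4:ℝ)^r * min 1 (t*a j)^(2*r)) * cf j :=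
            mul_le_mul_of_nonneg_right hpow (hcf j)
        _ = (4:ℝ)^r * cf j * min 1 (t*a j)^(2*r) := by ring
    have hQS : Q ≤ S^2 / c0 := by
      have h1 : c0 * t * Q ≤ c0 * t * (∑ j, (4:ℝ)^r * cf j * min 1 (t * a j)^(2*r)) :=
        mul_le_mul_of_nonneg_left hQle4 (by positivity)
      have h2 : c0 * t * Q ≤ t * S^2 := le_trans h1 hchain
      rw [le_div_iff₀ hc0]
      nlinarith
    have hsqQ : Real.sqrt Q ≤ S / Real.sqrt c0 := by
      have h1 : Q ≤ (S / Real.sqrt c0)^2 := by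
        rw [div_pow, Real.sq_sqrt hc0.le]; exact hQS
      calc Real.sqrt Q ≤ Real.sqrt ((S / Real.sqrt c0)^2) := Real.sqrt_le_sqrt h1
        _ = S / Real.sqrt c0 := Real.sqrt_sq (div_nonneg hSnn (Real.sqrt_nonneg _))
    -- the K-functional bound
    set χ : Fin N → ℂ := fun j => if t * sq j ≤ 1 then 1 else 0 with hχ_def
    set g : Fin N → ℂ := (specOp u χ).mulVec f with hg_def
    have hfg : cnorm2 (f - g) ≤ Real.sqrt Q := by
      have h1 : f - g = (specOp u ((1:Fin N → ℂ) - χ)).mulVec f := by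
        rw [specOp_sub, Matrix.sub_mulVec, specOp_one u hu, Matrix.one_mulVec, hg_def]
      rw [h1, cnorm2_specOp u hu]
      apply Real.sqrt_le_sqrt
      rw [hQ_def]
      apply Finset.sum_le_sum
      intro j _
      by_cases hj : t * sq j ≤ 1
      · have hz : ((1:Fin N → ℂ) - χ) j = 0 := by simp [hχ_def, hj]
        rw [hz]
        have h0 : 0 ≤ min 1 (t * sq j) :=
          le_min zero_le_one (mul_nonneg ht.le (Real.sqrt_nonneg _))
        have hzz : ‖(0:ℂ)‖^2 * cf j = 0 := by simp
        rw [hzz]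
        exact mul_nonneg (pow_nonneg h0 _) (hcf j)
      · have hz : ((1:Fin N → ℂ) - χ) j = 1 := by simp [hχ_def, hj]
        rw [hz]
        have hm : min 1 (t * sq j) = 1 := min_eq_left (le_of_lt (not_le.mp hj))
        rw [hm]
        simp only [norm_one, one_pow, one_mul]
        exact le_rfl
    have hterm : (t/2)^r * cnorm2 ((Lpow u lam ((r:ℝ)/2)).mulVec g) ≤ Real.sqrt Q := by
      have hLg : (Lpow u lam ((r:ℝ)/2)).mulVec g
          = (specOp u ((fun j => ((lam j ^ ((r:ℝ)/2) : ℝ) : ℂ)) * χ)).mulVec f := by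
        rw [hg_def, Matrix.mulVec_mulVec, Lpow, specOp_mul u hu]
      rw [hLg, cnorm2_specOp u hu]
      have hh : (t/2)^r * Real.sqrt (∑ j,
            ‖((fun j => ((lam j ^ ((r:ℝ)/2) : ℝ) : ℂ)) * χ) j‖^2 * cf j)
          = Real.sqrt (∑ j, ((t/2)^r)^2 *
            (‖((fun j => ((lam j ^ ((r:ℝ)/2) : ℝ) : ℂ)) * χ) j‖^2 * cf j)) := by
        rw [← Finset.mul_sum, Real.sqrt_mul (sq_nonneg _),
          Real.sqrt_sq (pow_nonneg (by linarith : (0:ℝ) ≤ t/2) r)]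
      rw [hh]
      apply Real.sqrt_le_sqrt
      rw [hQ_def]
      apply Finset.sum_le_sum
      intro j _
      by_cases hj : t * sq j ≤ 1
      · have hz : ((fun j => ((lam j ^ ((r:ℝ)/2) : ℝ) : ℂ)) * χ) j
            = ((lam j ^ ((r:ℝ)/2) : ℝ) : ℂ) := by simp [hχ_def, hj]
        rw [hz]
        have hφ : ‖((lam j ^ ((r:ℝ)/2) : ℝ) : ℂ)‖^2 = lam j ^ r := by
          rw [Complex.norm_real, Real.norm_eq_abs, abs_of_nonneg (Real.rpow_nonneg (hlamnn j) _)]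
          rw [← Real.rpow_natCast (lam j ^ ((r:ℝ)/2)) 2, ← Real.rpow_mul (hlamnn j)]
          rw [show ((r:ℝ)/2) * (2:ℕ) = (r:ℝ) by push_cast; ring, Real.rpow_natCast]
        rw [hφ]
        have hm : min 1 (t * sq j) = t * sq j := min_eq_right hj
        rw [hm]
        have e1 : ((t/2)^r)^2 * lam j ^ r = ((t/2)^2 * lam j)^r := by
          rw [← pow_right_comm, ← mul_pow]
        have e2 : (t * sq j)^(2*r) = (t^2 * lam j)^r := by
          rw [pow_mul, mul_pow, hsq_def, Real.sq_sqrt (hlamnn j)]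
        rw [← mul_assoc, e1, e2]
        apply mul_le_mul_of_nonneg_right _ (hcf j)
        apply pow_le_pow_left₀ (mul_nonneg (sq_nonneg _) (hlamnn j))
        nlinarith [hlamnn j, sq_nonneg t]
      · have hz : ((fun j => ((lam j ^ ((r:ℝ)/2) : ℝ) : ℂ)) * χ) j = 0 := by
          simp [hχ_def, hj]
        rw [hz]
        have h0 : 0 ≤ min 1 (t * sq j) :=
          le_min zero_le_one (mul_nonneg ht.le (Real.sqrt_nonneg _))
        have hzz : ((t/2)^r)^2 * (‖(0:ℂ)‖^2 * cf j) = 0 := by simp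
        rw [hzz]
        exact mul_nonneg (pow_nonneg h0 _) (hcf j)
    calc Kfun u lam r f t
        ≤ cnorm2 (f - g) + (t/2)^r * cnorm2 ((Lpow u lam ((r:ℝ)/2)).mulVec g) :=
          ciInf_le (hKbdd f t ht) g
      _ ≤ Real.sqrt Q + Real.sqrt Q := add_le_add hfg hterm
      _ = 2 * Real.sqrt Q := by ring
      _ ≤ 2 * (S / Real.sqrt c0) := by linarith [hsqQ]
      _ = 2 / Real.sqrt c0 * S := by ring
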